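/- Let n ≥ 1, let s_S and s_W be disjoint subsets of {1,…,n}, and let n_N, n_E be nonnegative integers with n_N + n_E = |s_S| + |s_W|. Then, for all elements x and t of a commutative ring, the sum, over all pairs (s_N, s_E) of disjoint subsets of {1,…,n} with s_N ∪ s_E = s_S ∪ s_W, |s_N| = n_N and |s_E| = n_E, of x^{n_E} · t^{d(s_N,s_E)}, equals x^{n_E} · Σ_{S ⊆ {0,1,…,n_N+n_E−1}, |S| = n_E} t^{Σ_{s∈S} s}. In other words, the colorblind vertex weight equals the sum of the colored vertex weights over all admissible outgoing colorings. -/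

import Mathlib

open Finset

/-- `d(s_N, s_E)` = number of pairs `(i,j)` with `i < j`, `i ∈ s_E`, `j ∈ s_N ∪ s_E`. -/
def dNE {n : ℕ} (sN sE : Finset (Fin n)) : ℕ :=
  (Finset.univ.filter fun p : Fin n × Fin n => p.1 < p.2 ∧ p.1 ∈ sE ∧ p.2 ∈ sN ∪ sE).card

lemma dNE_eq {n : ℕ} (u sN sE : Finset (Fin n)) (h : sN ∪ sE = u) :
    dNE sN sE = ∑ i ∈ sE, (u.filter (i < ·)).card := by
  unfold dNE
  rw [h]
  rw [Finset.card_eq_sum_card_fiberwise (f := Prod.fst) (t := sE)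
    (fun p hp => (mem_filter.mp hp).2.2.1)]
  refine Finset.sum_congr rfl fun i hi => ?_
  have hset : ((univ.filter fun p : Fin n × Fin n => p.1 < p.2 ∧ p.1 ∈ sE ∧ p.2 ∈ u).filter
      fun p => p.1 = i) = (u.filter (i < ·)).image (fun j => (i, j)) := by
    ext ⟨a, b⟩
    simp only [mem_filter, mem_univ, true_and, mem_image]
    constructor
    · rintro ⟨⟨h1, h2, h3⟩, rfl⟩
      exact ⟨b, ⟨h3, h1⟩, rfl⟩
    · rintro ⟨j, ⟨hj, hij⟩, heq⟩
      cases heq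
      exact ⟨⟨hij, hi, hj⟩, rfl⟩
  rw [hset, Finset.card_image_of_injective _ (fun a b h => congrArg Prod.snd h)]

/-- The colorblind vertex weight equals the sum of the colored vertex weights
`x^{|s_E|} t^{d(s_N,s_E)}` over all admissible outgoing colorings `(s_N, s_E)`. -/
theorem colorblind_weight_eq_sum_colored {R : Type*} [CommRing R] (n : ℕ) (hn : 1 ≤ n)
    (x t : R) (sS sW : Finset (Fin n)) (hdisj : sS ∩ sW = ∅)
    (nN nE : ℕ) (hsum : nN + nE = sS.card + sW.card) :
    ∑ p ∈ (Finset.univ : Finset (Finset (Fin n) × Finset (Fin n))).filter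
        (fun p => p.1 ∩ p.2 = ∅ ∧ p.1 ∪ p.2 = sS ∪ sW ∧ p.1.card = nN ∧ p.2.card = nE),
      x ^ nE * t ^ dNE p.1 p.2 =
    x ^ nE * ∑ S ∈ (Finset.range (nN + nE)).powersetCard nE, t ^ (∑ s ∈ S, s) := by
  set u := sS ∪ sW with hu
  have hucard : u.card = nN + nE := by
    rw [hu, Finset.card_union_of_disjoint (Finset.disjoint_iff_inter_eq_empty.mpr hdisj), hsum]
  set r : Fin n → ℕ := fun e => (u.filter (e < ·)).card with hr
  have hrlt : ∀ i ∈ u, r i < u.card := by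
    intro i hi
    refine Finset.card_lt_card ?_
    rw [Finset.ssubset_iff_of_subset (Finset.filter_subset _ _)]
    exact ⟨i, hi, by simp⟩
  have hranti : ∀ a ∈ u, ∀ b, b ∈ u → a < b → r b < r a := by
    intro a ha b hb hab
    refine Finset.card_lt_card ?_
    constructor
    · exact Finset.monotone_filter_right _ (fun j _ hj => lt_trans hab hj)
    · intro hsub
      have : b ∈ u.filter (b < ·) := hsub (by simp [hab, hb])
      simp at this
  have hinj : Set.InjOn r u := by
    intro a ha b hb hab
    rcases lt_trichotomy a b with h | h | h
    · exact absurd hab (hranti a ha b hb h).ne'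
    · exact h
    · exact absurd hab (hranti b hb a ha h).ne
  have himg : u.image r = Finset.range u.card := by
    apply Finset.eq_of_subset_of_card_le
    · intro s hs
      obtain ⟨i, hi, rfl⟩ := Finset.mem_image.mp hs
      exact Finset.mem_range.mpr (hrlt i hi)
    · rw [Finset.card_range, Finset.card_image_of_injOn hinj]
  have step1 : ∑ p ∈ (Finset.univ : Finset (Finset (Fin n) × Finset (Fin n))).filter
        (fun p => p.1 ∩ p.2 = ∅ ∧ p.1 ∪ p.2 = u ∧ p.1.card = nN ∧ p.2.card = nE),
      x ^ nE * t ^ dNE p.1 p.2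
      = ∑ sE ∈ u.powersetCard nE, x ^ nE * t ^ (∑ i ∈ sE, r i) := by
    refine Finset.sum_bij' (i := fun p _ => p.2) (j := fun sE _ => (u \ sE, sE))
      ?_ ?_ ?_ ?_ ?_
    · intro p hp
      simp only [mem_filter, mem_univ, true_and] at hp
      obtain ⟨h1, h2, h3, h4⟩ := hp
      exact Finset.mem_powersetCard.mpr ⟨by show p.2 ⊆ u; rw [← h2]; exact Finset.subset_union_right, h4⟩
    · intro sE hsE
      obtain ⟨hsub, hcard⟩ := Finset.mem_powersetCard.mp hsE
      simp only [mem_filter, mem_univ, true_and]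
      refine ⟨?_, Finset.sdiff_union_of_subset hsub, ?_, hcard⟩
      · rw [Finset.sdiff_inter_self]
      · rw [Finset.card_sdiff_of_subset hsub, hucard, hcard]
        omega
    · intro p hp
      simp only [mem_filter, mem_univ, true_and] at hp
      obtain ⟨h1, h2, h3, h4⟩ := hp
      have : u \ p.2 = p.1 := by
        rw [← h2, Finset.union_sdiff_right]
        exact Finset.sdiff_eq_self_of_disjoint (Finset.disjoint_iff_inter_eq_empty.mpr h1)
      exact Prod.ext this rfl
    · intro sE hsE
      rfl
    · intro p hp
      simp only [mem_filter, mem_univ, true_and] at hp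
      obtain ⟨h1, h2, h3, h4⟩ := hp
      rw [dNE_eq u p.1 p.2 h2]
  have step2 : ∑ sE ∈ u.powersetCard nE, x ^ nE * t ^ (∑ i ∈ sE, r i)
      = ∑ S ∈ (Finset.range (nN + nE)).powersetCard nE, x ^ nE * t ^ (∑ s ∈ S, s) := by
    rw [← hucard]
    refine Finset.sum_bij (i := fun sE _ => sE.image r) ?_ ?_ ?_ ?_
    · intro sE hsE
      obtain ⟨hsub, hcard⟩ := Finset.mem_powersetCard.mp hsE
      refine Finset.mem_powersetCard.mpr ⟨?_, ?_⟩
      · rw [← himg]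
        exact Finset.image_subset_image hsub
      · rw [Finset.card_image_of_injOn (hinj.mono (by exact_mod_cast hsub)), hcard]
    · intro a ha b hb hab
      obtain ⟨hsa, _⟩ := Finset.mem_powersetCard.mp ha
      obtain ⟨hsb, _⟩ := Finset.mem_powersetCard.mp hb
      have hab : Finset.image r a = Finset.image r b := hab
      ext i
      constructor
      · intro hi
        have : r i ∈ b.image r := hab ▸ Finset.mem_image_of_mem r hi
        obtain ⟨j, hj, hji⟩ := Finset.mem_image.mp this
        exact (hinj (hsb hj) (hsa hi) hji) ▸ hj
      · intro hi
        have : r i ∈ a.image r := hab ▸ Finset.mem_image_of_mem r hi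
        obtain ⟨j, hj, hji⟩ := Finset.mem_image.mp this
        exact (hinj (hsa hj) (hsb hi) hji) ▸ hj
    · intro S hS
      obtain ⟨hsub, hcard⟩ := Finset.mem_powersetCard.mp hS
      refine ⟨u.filter (fun i => r i ∈ S), ?_, ?_⟩
      · have himgeq : (u.filter (fun i => r i ∈ S)).image r = S := by
          apply Finset.Subset.antisymm
          · intro s hs
            obtain ⟨i, hi, rfl⟩ := Finset.mem_image.mp hs
            exact (Finset.mem_filter.mp hi).2
          · intro s hs
            have : s ∈ u.image r := himg ▸ hsub hs
            obtain ⟨i, hi, rfl⟩ := Finset.mem_image.mp this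
            exact Finset.mem_image_of_mem r (Finset.mem_filter.mpr ⟨hi, hs⟩)
        refine Finset.mem_powersetCard.mpr ⟨Finset.filter_subset _ _, ?_⟩
        rw [← hcard]
        conv_rhs => rw [← himgeq]
        exact (Finset.card_image_of_injOn
          (hinj.mono (by exact_mod_cast Finset.filter_subset _ _))).symm
      · apply Finset.Subset.antisymm
        · intro s hs
          obtain ⟨i, hi, rfl⟩ := Finset.mem_image.mp hs
          exact (Finset.mem_filter.mp hi).2
        · intro s hs
          have : s ∈ u.image r := himg ▸ hsub hs
          obtain ⟨i, hi, rfl⟩ := Finset.mem_image.mp this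
          exact Finset.mem_image_of_mem r (Finset.mem_filter.mpr ⟨hi, hs⟩)
    · intro sE hsE
      obtain ⟨hsub, _⟩ := Finset.mem_powersetCard.mp hsE
      rw [Finset.sum_image (fun a ha b hb => hinj (hsub ha) (hsub hb))]
  rw [step1, step2, Finset.mul_sum]
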